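/- For a symmetric open convex cone Γ ⊂ ℝⁿ with vertex at 0 satisfying Γₙ⁺ ⊆ Γ ⊆ Γ₁⁺ (where Γₙ⁺ is the positive orthant and Γ₁⁺ = {λ : λ₁+⋯+λₙ > 0}), the number μ_Γ⁺ defined by the condition (-μ_Γ⁺, 1, …, 1) ∈ ∂Γ exists, is unique, and satisfies 0 ≤ μ_Γ⁺ ≤ n−1. -/

import Mathlib

open Finset

/-- For a symmetric open convex cone Γ ⊂ ℝⁿ with vertex at 0 satisfying
Γₙ⁺ ⊆ Γ ⊆ Γ₁⁺, the number μ_Γ⁺ with (-μ_Γ⁺,1,…,1) ∈ ∂Γ exists, is unique, and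
satisfies 0 ≤ μ_Γ⁺ ≤ n−1. -/
theorem stmt0 (n : ℕ) (hn : 3 ≤ n) (Γ : Set (Fin n → ℝ))
    (hopen : IsOpen Γ) (hconv : Convex ℝ Γ) (hconn : IsConnected Γ)
    (hsymm : ∀ (σ : Equiv.Perm (Fin n)), ∀ x ∈ Γ, (x ∘ σ) ∈ Γ)
    (hcone : ∀ t : ℝ, 0 < t → ∀ x ∈ Γ, t • x ∈ Γ)
    (hsub1 : {x : Fin n → ℝ | ∀ i, 0 < x i} ⊆ Γ)
    (hsub2 : Γ ⊆ {x : Fin n → ℝ | 0 < ∑ i, x i}) :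
    (∃! μ : ℝ, (fun i : Fin n => if (i : ℕ) = 0 then -μ else 1) ∈ frontier Γ) ∧
    (∀ μ : ℝ, (fun i : Fin n => if (i : ℕ) = 0 then -μ else 1) ∈ frontier Γ →
      0 ≤ μ ∧ μ ≤ (n : ℝ) - 1) := by
  haveI : NeZero n := ⟨by omega⟩
  set c : ℝ → (Fin n → ℝ) := fun μ i => if (i : ℕ) = 0 then -μ else 1 with hc
  have hccont : Continuous c := by
    apply continuous_pi
    intro i
    by_cases h : (i : ℕ) = 0 <;> simp only [hc, h, if_true, if_false] <;> fun_prop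
  -- sum of coordinates of c μ
  have hsum : ∀ μ : ℝ, ∑ i, c μ i = -μ + ((n : ℝ) - 1) := by
    intro μ
    have : ∀ i : Fin n, c μ i = (if i = (0 : Fin n) then -μ else 1) := by
      intro i
      simp only [hc]
      congr 1
      rw [Fin.ext_iff, Fin.val_zero]
    rw [Finset.sum_congr rfl (fun i _ => this i)]
    rw [← Finset.add_sum_erase Finset.univ _ (Finset.mem_univ (0 : Fin n))]
    have h2 : ∀ i ∈ Finset.univ.erase (0 : Fin n),
        (if i = (0 : Fin n) then -μ else 1) = 1 := by
      intro i hi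
      simp [(Finset.mem_erase.mp hi).1]
    rw [Finset.sum_congr rfl h2, Finset.sum_const,
      Finset.card_erase_of_mem (Finset.mem_univ _), Finset.card_univ, Fintype.card_fin,
      if_pos rfl, nsmul_eq_mul, Nat.cast_sub (by omega : 1 ≤ n)]
    simp
  -- key monotonicity lemma
  have key : ∀ μ μ' : ℝ, μ' < μ → c μ ∈ closure Γ → c μ' ∈ Γ := by
    intro μ μ' hlt hclo
    set t : ℝ := μ - μ' with ht
    have htpos : 0 < t := by simp [ht]; linarith
    set s : ℝ := min (1/2) (t / (2 * (|μ| + 1))) with hs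
    have habs : 0 < 2 * (|μ| + 1) := by positivity
    have hspos : 0 < s := lt_min (by norm_num) (by positivity)
    have hs1 : s < 1 := lt_of_le_of_lt (min_le_left _ _) (by norm_num)
    have hsle : s ≤ t / (2 * (|μ| + 1)) := min_le_right _ _
    have hts : 2 * (|μ| + 1) ≤ t / s := by
      rw [le_div_iff₀ hspos]
      calc 2 * (|μ| + 1) * s ≤ 2 * (|μ| + 1) * (t / (2 * (|μ| + 1))) := by
            exact mul_le_mul_of_nonneg_left hsle (le_of_lt habs)
        _ = t := by field_simp
    set w : Fin n → ℝ := fun i => if (i : ℕ) = 0 then -μ + t / s else 1 with hw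
    have hwΓ : w ∈ Γ := by
      apply hsub1
      intro i
      simp only [hw]
      by_cases h : (i : ℕ) = 0
      · simp only [h, if_pos rfl, if_true]
        have h1 := le_abs_self μ
        linarith
      · simp [h]
    have hcombo : c μ' = s • w + (1 - s) • c μ := by
      funext i
      simp only [hc, hw, Pi.add_apply, Pi.smul_apply, smul_eq_mul]
      by_cases h : (i : ℕ) = 0
      · simp only [h, if_true]
        field_simp
        ring
      · simp only [h, if_false]
        ring
    rw [hcombo]
    have := hconv.combo_interior_closure_mem_interior (a := s) (b := 1 - s)
      (by rwa [hopen.interior_eq] : w ∈ interior Γ) hclo hspos (by linarith)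
      (by ring)
    rwa [hopen.interior_eq] at this
  -- the set S
  set S : Set ℝ := c ⁻¹' Γ with hS
  have hSopen : IsOpen S := hopen.preimage hccont
  have hSne : S.Nonempty := by
    refine ⟨-1, ?_⟩
    apply hsub1
    intro i
    simp only [hc]
    by_cases h : (i : ℕ) = 0 <;> simp [h]
  have hSbdd : BddAbove S := by
    refine ⟨(n : ℝ) - 1, fun μ hμ => ?_⟩
    have := hsub2 hμ
    rw [Set.mem_setOf_eq, hsum] at this
    linarith
  set μ₀ : ℝ := sSup S with hμ₀
  have hSdown : ∀ μ ∈ S, ∀ μ', μ' < μ → μ' ∈ S := by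
    intro μ hμ μ' hlt
    exact key μ μ' hlt (subset_closure hμ)
  have hlt_mem : ∀ μ < μ₀, μ ∈ S := by
    intro μ hμ
    obtain ⟨μ'', hμ''S, hgt⟩ := exists_lt_of_lt_csSup hSne hμ
    exact hSdown μ'' hμ''S μ hgt
  have hclo : c μ₀ ∈ closure Γ := by
    have h1 : μ₀ ∈ closure (Set.Iio μ₀) := by
      rw [closure_Iio]; exact Set.self_mem_Iic
    exact map_mem_closure hccont h1 (fun μ hμ => hlt_mem μ hμ)
  have hnotmem : c μ₀ ∉ Γ := by
    intro h
    have : μ₀ ∈ S := h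
    obtain ⟨ε, hε, hball⟩ := Metric.isOpen_iff.mp hSopen μ₀ this
    have : μ₀ + ε / 2 ∈ S := hball (by
      rw [Metric.mem_ball, Real.dist_eq, abs_of_pos (by linarith)]
      linarith)
    have := le_csSup hSbdd this
    linarith
  have hfront : c μ₀ ∈ frontier Γ := by
    rw [frontier, hopen.interior_eq]
    exact ⟨hclo, hnotmem⟩
  have huniq : ∀ μ : ℝ, c μ ∈ frontier Γ → μ = μ₀ := by
    intro μ hμ
    by_contra hne
    rcases lt_or_gt_of_ne hne with h | h
    · have : c μ ∈ Γ := key μ₀ μ h hclo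
      exact hμ.2 (by rwa [hopen.interior_eq])
    · have : c μ₀ ∈ Γ := key μ μ₀ h hμ.1
      exact hnotmem this
  constructor
  · exact ⟨μ₀, hfront, huniq⟩
  · intro μ hμ
    constructor
    · by_contra hneg
      push_neg at hneg
      have : c μ ∈ Γ := by
        apply hsub1
        intro i
        simp only [hc]
        by_cases h : (i : ℕ) = 0 <;> simp [h]
        linarith
      exact hμ.2 (by rwa [hopen.interior_eq])
    · have h1 : c μ ∈ closure {x : Fin n → ℝ | 0 < ∑ i, x i} :=
        closure_mono hsub2 hμ.1
      have h2 : c μ ∈ {x : Fin n → ℝ | 0 ≤ ∑ i, x i} := by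
        have hcl : IsClosed {x : Fin n → ℝ | 0 ≤ ∑ i, x i} :=
          isClosed_le continuous_const (by fun_prop)
        have hss : {x : Fin n → ℝ | 0 < ∑ i, x i} ⊆ {x : Fin n → ℝ | 0 ≤ ∑ i, x i} :=
          by intro x hx; simp only [Set.mem_setOf_eq] at hx ⊢; linarith
        exact hcl.closure_subset_iff.mpr hss h1
      rw [Set.mem_setOf_eq, hsum] at h2
      linarith
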